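/- arXiv:1511.03022 — 2 statements merged into one kernel-verified Lean document; each statement's English description precedes it below -/
import Mathlib

section
/- Let V be a smooth hypersurface of degree d and even dimension n ≥ 2 over a number field E, with middle Betti quadratic form q_B (cup product on H^n(V(C), Q) followed by the trace). Then w_1(q_B) = (n/2)(d−1)·(−1) in E^×/(E^×)^2, i.e. disc(q_B) = (−1)^{(n/2)(d−1)} up to squares. -/
open Finset in
lemma aux_sum_even {R : Type*} [CommRing R] (u : R) (k : ℕ) :
    ∑ i ∈ range (2*k), u^i = (1+u) * ∑ j ∈ range k, (u^2)^j := by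
  induction k with
  | zero => simp
  | succ k ih =>
    have h2 : 2*(k+1) = 2*k + 1 + 1 := by ring
    rw [h2, sum_range_succ, sum_range_succ, ih, sum_range_succ]
    ring

lemma aux_zero_sum (k : ℕ) : ∑ j ∈ Finset.range (k+1), (0:ZMod 4)^j = 1 := by
  rw [Finset.sum_range_succ']
  simp [pow_succ]

/-- **First Hasse–Witt invariant of the middle Betti form of a hypersurface.**
`V` is a smooth hypersurface of degree `d` and even dimension `n ≥ 2` over a
number field; the middle Betti form `q_B` is unimodular of rank
`b_n = 2 + (1/d)[(1−d)^{n+2}−1]` with real signature `(r, s)` (so that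
`w_1(q_B) = s·(−1)`, i.e. `disc(q_B) = (−1)^s` up to squares), and by the
index theorem the signature `τ = r − s` satisfies `τ ≡ 0 mod 8` if `d` is
even and `n ≡ 2 mod 4`, and `τ ≡ d mod 8` otherwise.  Then
`w_1(q_B) = (n/2)(d−1)·(−1)`, i.e. `s ≡ (n/2)(d−1) mod 2`. -/
theorem stmt_7 (n d : ℕ) (hn : 2 ≤ n) (hne : Even n) (hd : 1 ≤ d)
    (r s : ℤ) (hr : 0 ≤ r) (hs : 0 ≤ s)
    (hrank : (r + s) * d = 2 * d + ((1 - (d : ℤ)) ^ (n + 2) - 1))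
    (htau : r - s ≡ (if Even d ∧ n % 4 = 2 then 0 else (d : ℤ)) [ZMOD 8]) :
    s ≡ ((n / 2 : ℕ) : ℤ) * ((d : ℤ) - 1) [ZMOD 2] := by
  obtain ⟨m, hm⟩ := hne
  have hn2 : n = 2*m := by omega
  have hndiv : n / 2 = m := by omega
  rw [hndiv]
  set S : ℤ := ∑ i ∈ Finset.range (n+2), (1-(d:ℤ))^i with hSdef
  have hS : S * ((1 - (d:ℤ)) - 1) = (1 - (d:ℤ))^(n+2) - 1 := geom_sum_mul _ _
  have hd0 : (d:ℤ) ≠ 0 := by positivity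
  have hb : r + s = 2 - S := by
    have h1 : (r + s - (2 - S)) * d = 0 := by linear_combination hrank - hS
    rcases mul_eq_zero.mp h1 with h | h
    · linarith
    · exact absurd h hd0
  have hcast : (S : ZMod 4) =
      (1 + (1 - (d:ZMod 4))) * ∑ j ∈ Finset.range (m+1), ((1 - (d:ZMod 4))^2)^j := by
    have hnn : n + 2 = 2*(m+1) := by omega
    rw [hSdef, hnn]
    push_cast
    exact aux_sum_even _ _
  have hd4 : d % 4 = 0 ∨ d % 4 = 1 ∨ d % 4 = 2 ∨ d % 4 = 3 := by omega
  -- generic tool: from (S : ZMod 4) = cast of integer v, get 4 ∣ S - v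
  have dvdOf : ∀ v : ℤ, (S : ZMod 4) = (v : ZMod 4) → (4:ℤ) ∣ S - v := by
    intro v hv
    have : ((S - v : ℤ) : ZMod 4) = 0 := by push_cast; rw [hv]; ring
    exact (ZMod.intCast_zmod_eq_zero_iff_dvd _ 4).mp this
  rcases hd4 with hc | hc | hc | hc
  · -- d ≡ 0 mod 4, d even
    obtain ⟨q, hq⟩ : ∃ q, d = 4*q := ⟨d/4, by omega⟩
    have hdz : (d : ZMod 4) = 0 := by
      rw [hq]; push_cast; ring_nf; simp [show (4:ZMod 4) = 0 from by decide]
    have hSv : (4:ℤ) ∣ S - 2*(m+1) := by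
      apply dvdOf
      rw [hcast, hdz]
      push_cast
      simp [Finset.sum_const]
      ring
    have hde : Even d := by rw [Nat.even_iff]; omega
    by_cases hm2 : n % 4 = 2
    · rw [if_pos ⟨hde, hm2⟩] at htau
      have ht := Int.ModEq.dvd htau
      rw [Int.modEq_iff_dvd]
      have hkey : (2:ℤ) ∣ (m:ℤ) - s := by omega
      have h1 : (2:ℤ) ∣ (m:ℤ)*((d:ℤ)-1) - m := ⟨(m:ℤ)*(2*q - 1), by push_cast [hq]; ring⟩
      have : (m:ℤ)*((d:ℤ)-1) - s = ((m:ℤ)*((d:ℤ)-1) - m) + ((m:ℤ) - s) := by ring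
      rw [this]; exact dvd_add h1 hkey
    · rw [if_neg (by tauto)] at htau
      have ht := Int.ModEq.dvd htau
      rw [Int.modEq_iff_dvd]
      have hkey : (2:ℤ) ∣ (m:ℤ) - s := by omega
      have h1 : (2:ℤ) ∣ (m:ℤ)*((d:ℤ)-1) - m := ⟨(m:ℤ)*(2*q - 1), by push_cast [hq]; ring⟩
      have : (m:ℤ)*((d:ℤ)-1) - s = ((m:ℤ)*((d:ℤ)-1) - m) + ((m:ℤ) - s) := by ring
      rw [this]; exact dvd_add h1 hkey
  · -- d ≡ 1 mod 4, d odd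
    obtain ⟨q, hq⟩ : ∃ q, d = 4*q + 1 := ⟨d/4, by omega⟩
    have hdz : (d : ZMod 4) = 1 := by
      rw [hq]; push_cast; ring_nf; simp [show (4:ZMod 4) = 0 from by decide]
    have hSv : (4:ℤ) ∣ S - 1 := by
      apply dvdOf
      rw [hcast, hdz]
      norm_num [aux_zero_sum]
    have hdo : ¬ (Even d ∧ n % 4 = 2) := by
      rintro ⟨he, _⟩; rw [Nat.even_iff] at he; omega
    rw [if_neg hdo] at htau
    have ht := Int.ModEq.dvd htau
    rw [Int.modEq_iff_dvd]
    have hkey : (2:ℤ) ∣ (0:ℤ) - s := by omega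
    have h1 : (2:ℤ) ∣ (m:ℤ)*((d:ℤ)-1) := ⟨(m:ℤ)*(2*q), by push_cast [hq]; ring⟩
    have : (m:ℤ)*((d:ℤ)-1) - s = ((m:ℤ)*((d:ℤ)-1)) + ((0:ℤ) - s) := by ring
    rw [this]; exact dvd_add h1 hkey
  · -- d ≡ 2 mod 4, d even
    obtain ⟨q, hq⟩ : ∃ q, d = 4*q + 2 := ⟨d/4, by omega⟩
    have hdz : (d : ZMod 4) = 2 := by
      rw [hq]; push_cast; ring_nf; simp [show (4:ZMod 4) = 0 from by decide]
    have hSv : (4:ℤ) ∣ S - 0 := by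
      apply dvdOf 0
      rw [hcast, hdz]
      norm_num
    have hde : Even d := by rw [Nat.even_iff]; omega
    by_cases hm2 : n % 4 = 2
    · rw [if_pos ⟨hde, hm2⟩] at htau
      have ht := Int.ModEq.dvd htau
      rw [Int.modEq_iff_dvd]
      have hkey : (2:ℤ) ∣ (m:ℤ) - s := by omega
      have h1 : (2:ℤ) ∣ (m:ℤ)*((d:ℤ)-1) - m := ⟨(m:ℤ)*(2*q), by push_cast [hq]; ring⟩
      have : (m:ℤ)*((d:ℤ)-1) - s = ((m:ℤ)*((d:ℤ)-1) - m) + ((m:ℤ) - s) := by ring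
      rw [this]; exact dvd_add h1 hkey
    · rw [if_neg (by tauto)] at htau
      have ht := Int.ModEq.dvd htau
      rw [Int.modEq_iff_dvd]
      have hkey : (2:ℤ) ∣ (m:ℤ) - s := by omega
      have h1 : (2:ℤ) ∣ (m:ℤ)*((d:ℤ)-1) - m := ⟨(m:ℤ)*(2*q), by push_cast [hq]; ring⟩
      have : (m:ℤ)*((d:ℤ)-1) - s = ((m:ℤ)*((d:ℤ)-1) - m) + ((m:ℤ) - s) := by ring
      rw [this]; exact dvd_add h1 hkey
  · -- d ≡ 3 mod 4, d odd
    obtain ⟨q, hq⟩ : ∃ q, d = 4*q + 3 := ⟨d/4, by omega⟩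
    have hdz : (d : ZMod 4) = 3 := by
      rw [hq]; push_cast; ring_nf; simp [show (4:ZMod 4) = 0 from by decide]
    have hSv : (4:ℤ) ∣ S - 3 := by
      apply dvdOf
      rw [hcast, hdz]
      have h02 : ((1:ZMod 4) - 3)^2 = 0 := by decide
      rw [h02, aux_zero_sum]
      decide
    have hdo : ¬ (Even d ∧ n % 4 = 2) := by
      rintro ⟨he, _⟩; rw [Nat.even_iff] at he; omega
    rw [if_neg hdo] at htau
    have ht := Int.ModEq.dvd htau
    rw [Int.modEq_iff_dvd]
    have hkey : (2:ℤ) ∣ (0:ℤ) - s := by omega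
    have h1 : (2:ℤ) ∣ (m:ℤ)*((d:ℤ)-1) := ⟨(m:ℤ)*(2*q + 1), by push_cast [hq]; ring⟩
    have : (m:ℤ)*((d:ℤ)-1) - s = ((m:ℤ)*((d:ℤ)-1)) + ((0:ℤ) - s) := by ring
    rw [this]; exact dvd_add h1 hkey
end

section
/- Let A be a finite-dimensional Hopf algebra over a field k of characteristic ≠ 2, with linear dual A^D = Hom_k(A,k), antipode S^D on A^D, and let θ be a generator of the (one-dimensional) space of left integrals of A. Then the bilinear form κ_θ(u,v) = (S^D(u)·v)(θ) on A^D is non-degenerate. -/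
set_option maxHeartbeats 1600000

open TensorProduct

/-- The unit form `κ_θ` of a Hopf algebra `A`: for `u, v ∈ A^D = Hom_k(A, k)`,
`κ_θ(u, v) = (S^D(u)·v)(θ)`, where the product on `A^D` is the convolution
product dual to the comultiplication of `A` and `S^D(u) = u ∘ S`; explicitly
`κ_θ(u, v) = Σ_{(θ)} u(S(θ₍₁₎))·v(θ₍₂₎)`. -/
noncomputable def kappa (k : Type*) {A : Type*} [CommRing k] [Ring A]
    [HopfAlgebra k A] (θ : A)
    (u v : Module.Dual k A) : k :=
  LinearMap.mul' k k
    ((TensorProduct.map (u ∘ₗ HopfAlgebra.antipode (R := k)) v)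
      (Coalgebra.comul (R := k) θ))

open Coalgebra HopfAlgebra

namespace HopfAux

variable {k : Type*} [Field k] {A : Type*} [Ring A] [HopfAlgebra k A]

local notation "ε" => Coalgebra.counit (R := k)
local notation "𝒮" => HopfAlgebra.antipode (R := k) (A := A)





lemma repr_counit_right {a : A} (r : Repr k a (A × A)) :
    ∑ i ∈ r.index, ε (r.right i) • r.left i = a := by
  have h := congrArg (TensorProduct.rid k A) (Coalgebra.sum_tmul_counit_eq (R := k) r)
  simp only [map_sum, TensorProduct.rid_tmul, TensorProduct.rid_tmul] at h
  simpa using h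

lemma repr_counit_left {a : A} (r : Repr k a (A × A)) :
    ∑ i ∈ r.index, ε (r.left i) • r.right i = a := by
  have h := congrArg (TensorProduct.lid k A) (Coalgebra.sum_counit_tmul_eq (R := k) r)
  simp only [map_sum, TensorProduct.lid_tmul] at h
  simpa using h

/-- product of two representations -/
noncomputable def reprMul {a b : A} (ra : Repr k a (A × A)) (rb : Repr k b (A × A)) : Repr k (a * b) ((A × A) × (A × A)) where
  index := ra.index ×ˢ rb.index
  left p := ra.left p.1 * rb.left p.2
  right p := ra.right p.1 * rb.right p.2
  eq := by
    rw [Bialgebra.comul_mul, ← ra.eq, ← rb.eq, Finset.sum_mul_sum]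
    rw [Finset.sum_product]
    simp [Algebra.TensorProduct.tmul_mul_tmul]

@[simp] lemma reprMul_index {a b : A} (ra : Repr k a (A × A)) (rb : Repr k b (A × A)) :
    (reprMul ra rb).index = ra.index ×ˢ rb.index := rfl

@[simp] lemma reprMul_left {a b : A} (ra : Repr k a (A × A)) (rb : Repr k b (A × A)) (p) :
    (reprMul ra rb).left p = ra.left p.1 * rb.left p.2 := rfl

@[simp] lemma reprMul_right {a b : A} (ra : Repr k a (A × A)) (rb : Repr k b (A × A)) (p) :
    (reprMul ra rb).right p = ra.right p.1 * rb.right p.2 := rfl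

lemma antipode_one : 𝒮 (1 : A) = 1 := by
  have h := HopfAlgebra.mul_antipode_rTensor_comul_apply (R := k) (a := (1 : A))
  rw [Bialgebra.comul_one] at h
  rw [Algebra.TensorProduct.one_def] at h
  simpa using h






/-- Reorder a 4-fold sum. -/
lemma sum4_swap {W : Type*} [AddCommMonoid W] {α β : Type*} {γ : α → Type*} {δ : β → Type*}
    (s : Finset α) (t : Finset β) (u : ∀ i, Finset (γ i)) (v : ∀ p, Finset (δ p))
    (f : ∀ (i : α), γ i → ∀ (p : β), δ p → W) :
    ∑ p ∈ t, ∑ q ∈ v p, ∑ i ∈ s, ∑ j ∈ u i, f i j p q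
      = ∑ i ∈ s, ∑ j ∈ u i, ∑ p ∈ t, ∑ q ∈ v p, f i j p q := by
  rw [Finset.sum_congr rfl fun p (_ : p ∈ t) => Finset.sum_comm, Finset.sum_comm]
  refine Finset.sum_congr rfl fun i _ => ?_
  rw [Finset.sum_congr rfl fun p (_ : p ∈ t) => Finset.sum_comm, Finset.sum_comm]

/-- Exchange between the two nested Sweedler patterns, through any linear map. -/
lemma triple_exchange {W : Type*} [AddCommGroup W] [Module k W] {a : A}
    (r : Repr k a (A × A)) (r1 : ∀ i, Repr k (r.left i) (A × A)) (r2 : ∀ i, Repr k (r.right i) (A × A))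
    (L : A ⊗[k] (A ⊗[k] A) →ₗ[k] W) :
    ∑ i ∈ r.index, ∑ j ∈ (r1 i).index,
      L ((r1 i).left j ⊗ₜ[k] ((r1 i).right j ⊗ₜ[k] r.right i))
    = ∑ i ∈ r.index, ∑ j ∈ (r2 i).index,
      L (r.left i ⊗ₜ[k] ((r2 i).left j ⊗ₜ[k] (r2 i).right j)) := by
  have h := congrArg L (Coalgebra.sum_tmul_tmul_eq r r1 r2)
  simpa only [map_sum] using h

/-- Apply a linear map to a sum-of-tensors identity. -/
lemma sum_apply_eq {W : Type*} [AddCommGroup W] [Module k W] {ι₁ ι₂ : Type*}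
    {s : Finset ι₁} {t : Finset ι₂} {x y : ι₁ → A} {c d : ι₂ → A}
    (h : ∑ i ∈ s, x i ⊗ₜ[k] y i = ∑ j ∈ t, c j ⊗ₜ[k] d j)
    (L : A ⊗[k] A →ₗ[k] W) :
    ∑ i ∈ s, L (x i ⊗ₜ[k] y i) = ∑ j ∈ t, L (c j ⊗ₜ[k] d j) := by
  have := congrArg L h; simpa only [map_sum] using this


section AntipodeMul

variable (a b : A)

lemma antipode_mul_aux (ra : Repr k a (A × A)) (rb : Repr k b (A × A))
    (ra1 : ∀ i, Repr k (ra.left i) (A × A)) (ra2 : ∀ i, Repr k (ra.right i) (A × A))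
    (rb1 : ∀ p, Repr k (rb.left p) (A × A)) (rb2 : ∀ p, Repr k (rb.right p) (A × A)) :
    𝒮 (a * b) = 𝒮 b * 𝒮 a := by
  classical
  set E : A := ∑ i ∈ ra.index, ∑ p ∈ rb.index, ∑ j ∈ (ra2 i).index, ∑ q ∈ (rb2 p).index,
      𝒮 (ra.left i * rb.left p) *
        (((ra2 i).left j * (rb2 p).left q) * (𝒮 ((rb2 p).right q) * 𝒮 ((ra2 i).right j)))
    with hE
  -- Chain 1 : E = 𝒮 (a * b)
  have chain1 : E = 𝒮 (a * b) := by
    have hq : ∀ i p j, ∑ q ∈ (rb2 p).index,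
        𝒮 (ra.left i * rb.left p) *
          (((ra2 i).left j * (rb2 p).left q) * (𝒮 ((rb2 p).right q) * 𝒮 ((ra2 i).right j)))
        = ε (rb.right p) • (𝒮 (ra.left i * rb.left p) *
            ((ra2 i).left j * 𝒮 ((ra2 i).right j))) := by
      intro i p j
      have e1 : ∀ q, 𝒮 (ra.left i * rb.left p) *
          (((ra2 i).left j * (rb2 p).left q) * (𝒮 ((rb2 p).right q) * 𝒮 ((ra2 i).right j)))
          = 𝒮 (ra.left i * rb.left p) *
            ((ra2 i).left j * (((rb2 p).left q * 𝒮 ((rb2 p).right q)) * 𝒮 ((ra2 i).right j))) := by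
        intro q; simp only [mul_assoc]
      rw [Finset.sum_congr rfl fun q _ => e1 q]
      have e2 : ∑ q ∈ (rb2 p).index,
          𝒮 (ra.left i * rb.left p) *
            ((ra2 i).left j * (((rb2 p).left q * 𝒮 ((rb2 p).right q)) * 𝒮 ((ra2 i).right j)))
          = 𝒮 (ra.left i * rb.left p) *
            ((ra2 i).left j * ((∑ q ∈ (rb2 p).index, (rb2 p).left q * 𝒮 ((rb2 p).right q)) *
              𝒮 ((ra2 i).right j))) := by
        simp only [Finset.mul_sum, Finset.sum_mul]
      rw [e2, sum_mul_antipode_eq_smul (rb2 p)]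
      simp only [smul_mul_assoc, one_mul, mul_smul_comm]
    calc E = ∑ i ∈ ra.index, ∑ p ∈ rb.index, ∑ j ∈ (ra2 i).index,
          ε (rb.right p) • (𝒮 (ra.left i * rb.left p) *
            ((ra2 i).left j * 𝒮 ((ra2 i).right j))) := by
            rw [hE]
            exact Finset.sum_congr rfl fun i _ => Finset.sum_congr rfl fun p _ =>
              Finset.sum_congr rfl fun j _ => hq i p j
      _ = ∑ i ∈ ra.index, ∑ p ∈ rb.index,
          ε (rb.right p) • ε (ra.right i) • 𝒮 (ra.left i * rb.left p) := by
            refine Finset.sum_congr rfl fun i _ => Finset.sum_congr rfl fun p _ => ?_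
            rw [← Finset.smul_sum, ← Finset.mul_sum, sum_mul_antipode_eq_smul (ra2 i)]
            simp only [mul_smul_comm, mul_one]
      _ = ∑ i ∈ ra.index, ε (ra.right i) • ∑ p ∈ rb.index,
          ε (rb.right p) • 𝒮 (ra.left i * rb.left p) := by
            refine Finset.sum_congr rfl fun i _ => ?_
            rw [Finset.smul_sum]
            exact Finset.sum_congr rfl fun p _ => smul_comm _ _ _
      _ = ∑ i ∈ ra.index, ε (ra.right i) • 𝒮 (ra.left i * b) := by
            refine Finset.sum_congr rfl fun i _ => ?_
            congr 1
            have h := congrArg (𝒮 ∘ₗ LinearMap.mulLeft k (ra.left i)) (repr_counit_right rb)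
            simpa [map_sum] using h
      _ = 𝒮 (a * b) := by
            have h := congrArg (𝒮 ∘ₗ LinearMap.mulRight k b) (repr_counit_right ra)
            simpa [map_sum] using h
  -- Chain 2 : E = 𝒮 b * 𝒮 a
  have chain2 : E = 𝒮 b * 𝒮 a := by
    -- reorder sums : p,q outside
    have hswap1 : E = ∑ p ∈ rb.index, ∑ q ∈ (rb2 p).index, ∑ i ∈ ra.index, ∑ j ∈ (ra2 i).index,
        𝒮 (ra.left i * rb.left p) *
          (((ra2 i).left j * (rb2 p).left q) * (𝒮 ((rb2 p).right q) * 𝒮 ((ra2 i).right j))) := by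
      rw [hE, Finset.sum_comm]
      refine Finset.sum_congr rfl fun p _ => ?_
      rw [Finset.sum_congr rfl fun i (_ : i ∈ ra.index) => Finset.sum_comm]
      exact Finset.sum_comm
    -- exchange on the a-side
    have hexA : ∀ p q, ∑ i ∈ ra.index, ∑ j ∈ (ra1 i).index,
        𝒮 ((ra1 i).left j * rb.left p) *
          (((ra1 i).right j * (rb2 p).left q) * (𝒮 ((rb2 p).right q) * 𝒮 (ra.right i)))
        = ∑ i ∈ ra.index, ∑ j ∈ (ra2 i).index,
        𝒮 (ra.left i * rb.left p) *
          (((ra2 i).left j * (rb2 p).left q) * (𝒮 ((rb2 p).right q) * 𝒮 ((ra2 i).right j))) := by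
      intro p q
      have h := triple_exchange ra ra1 ra2
        (LinearMap.mul' k A ∘ₗ TensorProduct.map (𝒮 ∘ₗ LinearMap.mulRight k (rb.left p))
          (LinearMap.mul' k A ∘ₗ TensorProduct.map (LinearMap.mulRight k ((rb2 p).left q))
            (LinearMap.mulLeft k (𝒮 ((rb2 p).right q)) ∘ₗ 𝒮)))
      simpa only [LinearMap.coe_comp, Function.comp_apply, TensorProduct.map_tmul,
        LinearMap.mul'_apply, LinearMap.mulLeft_apply, LinearMap.mulRight_apply] using h
    have hstep1 : E = ∑ p ∈ rb.index, ∑ q ∈ (rb2 p).index, ∑ i ∈ ra.index, ∑ j ∈ (ra1 i).index,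
        𝒮 ((ra1 i).left j * rb.left p) *
          (((ra1 i).right j * (rb2 p).left q) * (𝒮 ((rb2 p).right q) * 𝒮 (ra.right i))) := by
      rw [hswap1]
      exact Finset.sum_congr rfl fun p _ => Finset.sum_congr rfl fun q _ => (hexA p q).symm
    -- reorder : i,j outside
    have hswap2 : E = ∑ i ∈ ra.index, ∑ j ∈ (ra1 i).index, ∑ p ∈ rb.index, ∑ q ∈ (rb2 p).index,
        𝒮 ((ra1 i).left j * rb.left p) *
          (((ra1 i).right j * (rb2 p).left q) * (𝒮 ((rb2 p).right q) * 𝒮 (ra.right i))) := by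
      rw [hstep1]
      exact sum4_swap _ _ _ _ _
    -- exchange on the b-side
    have hexB : ∀ i j, ∑ p ∈ rb.index, ∑ q ∈ (rb1 p).index,
        𝒮 ((ra1 i).left j * (rb1 p).left q) *
          (((ra1 i).right j * (rb1 p).right q) * (𝒮 (rb.right p) * 𝒮 (ra.right i)))
        = ∑ p ∈ rb.index, ∑ q ∈ (rb2 p).index,
        𝒮 ((ra1 i).left j * rb.left p) *
          (((ra1 i).right j * (rb2 p).left q) * (𝒮 ((rb2 p).right q) * 𝒮 (ra.right i))) := by
      intro i j
      have h := triple_exchange rb rb1 rb2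
        (LinearMap.mul' k A ∘ₗ TensorProduct.map (𝒮 ∘ₗ LinearMap.mulLeft k ((ra1 i).left j))
          (LinearMap.mul' k A ∘ₗ TensorProduct.map (LinearMap.mulLeft k ((ra1 i).right j))
            (LinearMap.mulRight k (𝒮 (ra.right i)) ∘ₗ 𝒮)))
      simpa only [LinearMap.coe_comp, Function.comp_apply, TensorProduct.map_tmul,
        LinearMap.mul'_apply, LinearMap.mulLeft_apply, LinearMap.mulRight_apply] using h
    have hstep2 : E = ∑ i ∈ ra.index, ∑ j ∈ (ra1 i).index, ∑ p ∈ rb.index, ∑ q ∈ (rb1 p).index,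
        𝒮 ((ra1 i).left j * (rb1 p).left q) *
          (((ra1 i).right j * (rb1 p).right q) * (𝒮 (rb.right p) * 𝒮 (ra.right i))) := by
      rw [hswap2]
      exact Finset.sum_congr rfl fun i _ => Finset.sum_congr rfl fun j _ => (hexB i j).symm
    -- reorder : i,p outside, j,q inside
    have hswap3 : E = ∑ i ∈ ra.index, ∑ p ∈ rb.index, ∑ j ∈ (ra1 i).index, ∑ q ∈ (rb1 p).index,
        𝒮 ((ra1 i).left j * (rb1 p).left q) *
          (((ra1 i).right j * (rb1 p).right q) * (𝒮 (rb.right p) * 𝒮 (ra.right i))) := by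
      rw [hstep2]
      exact Finset.sum_congr rfl fun i _ => Finset.sum_comm
    -- collapse the inner double sum using the antipode axiom for a product representation
    have hcol : ∀ i ∈ ra.index, ∀ p ∈ rb.index,
        ∑ j ∈ (ra1 i).index, ∑ q ∈ (rb1 p).index,
          𝒮 ((ra1 i).left j * (rb1 p).left q) *
            (((ra1 i).right j * (rb1 p).right q) * (𝒮 (rb.right p) * 𝒮 (ra.right i)))
        = ε (ra.left i) • ε (rb.left p) • (𝒮 (rb.right p) * 𝒮 (ra.right i)) := by
      intro i _ p _
      have key : ∑ j ∈ (ra1 i).index, ∑ q ∈ (rb1 p).index,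
          𝒮 ((ra1 i).left j * (rb1 p).left q) * ((ra1 i).right j * (rb1 p).right q)
          = (ε (ra.left i) * ε (rb.left p)) • (1 : A) := by
        have h := sum_antipode_mul_eq_smul (reprMul (ra1 i) (rb1 p))
        simp only [reprMul_index, reprMul_left, reprMul_right] at h
        rw [← Finset.sum_product',
          show ε (ra.left i) * ε (rb.left p) = ε (ra.left i * rb.left p) from
            (Bialgebra.counit_mul _ _).symm]
        exact h
      have e1 : ∀ j q, 𝒮 ((ra1 i).left j * (rb1 p).left q) *
            (((ra1 i).right j * (rb1 p).right q) * (𝒮 (rb.right p) * 𝒮 (ra.right i)))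
          = (𝒮 ((ra1 i).left j * (rb1 p).left q) * ((ra1 i).right j * (rb1 p).right q)) *
              (𝒮 (rb.right p) * 𝒮 (ra.right i)) := by
        intro j q; simp only [mul_assoc]
      calc ∑ j ∈ (ra1 i).index, ∑ q ∈ (rb1 p).index,
            𝒮 ((ra1 i).left j * (rb1 p).left q) *
              (((ra1 i).right j * (rb1 p).right q) * (𝒮 (rb.right p) * 𝒮 (ra.right i)))
          = (∑ j ∈ (ra1 i).index, ∑ q ∈ (rb1 p).index,
              𝒮 ((ra1 i).left j * (rb1 p).left q) * ((ra1 i).right j * (rb1 p).right q)) *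
                (𝒮 (rb.right p) * 𝒮 (ra.right i)) := by
            rw [Finset.sum_mul]
            refine Finset.sum_congr rfl fun j _ => ?_
            rw [Finset.sum_mul]
            exact Finset.sum_congr rfl fun q _ => e1 j q
        _ = ε (ra.left i) • ε (rb.left p) • (𝒮 (rb.right p) * 𝒮 (ra.right i)) := by
            rw [key]; simp [smul_mul_assoc, mul_smul]
    rw [hswap3, Finset.sum_congr rfl fun i hi => Finset.sum_congr rfl fun p hp => hcol i hi p hp]
    have hb : ∑ p ∈ rb.index, ε (rb.left p) • 𝒮 (rb.right p) = 𝒮 b := by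
      have h := congrArg 𝒮 (repr_counit_left rb); simpa [map_sum] using h
    calc ∑ i ∈ ra.index, ∑ p ∈ rb.index,
          ε (ra.left i) • ε (rb.left p) • (𝒮 (rb.right p) * 𝒮 (ra.right i))
        = ∑ i ∈ ra.index, ε (ra.left i) •
            ((∑ p ∈ rb.index, ε (rb.left p) • 𝒮 (rb.right p)) * 𝒮 (ra.right i)) := by
          refine Finset.sum_congr rfl fun i _ => ?_
          rw [← Finset.smul_sum, Finset.sum_mul]
          simp only [smul_mul_assoc]
      _ = 𝒮 b * ∑ i ∈ ra.index, ε (ra.left i) • 𝒮 (ra.right i) := by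
          rw [hb, Finset.mul_sum]
          exact Finset.sum_congr rfl fun i _ => by rw [mul_smul_comm]
      _ = 𝒮 b * 𝒮 a := by
          congr 1
          have h := congrArg 𝒮 (repr_counit_left ra); simpa [map_sum] using h
  rw [← chain1, chain2]

end AntipodeMul



lemma antipode_mul (a b : A) : 𝒮 (a * b) = 𝒮 b * 𝒮 a :=
  antipode_mul_aux a b (ℛ k a) (ℛ k b) (fun _ => ℛ k _) (fun _ => ℛ k _)
    (fun _ => ℛ k _) (fun _ => ℛ k _)

section Core

variable (θ : A) (T : A →ₗ[k] A) (rθ : Repr k θ (A × A))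

lemma sum3_swap {W : Type*} [AddCommMonoid W] {α β : Type*} {γ : α → Type*}
    (s : Finset α) (t : Finset β) (u : ∀ i, Finset (γ i)) (f : ∀ i : α, γ i → β → W) :
    ∑ i ∈ s, ∑ j ∈ u i, ∑ m ∈ t, f i j m = ∑ m ∈ t, ∑ i ∈ s, ∑ j ∈ u i, f i j m :=
  (Finset.sum_congr rfl fun i _ => Finset.sum_comm).trans Finset.sum_comm

lemma sum_T_mul {T : A →ₗ[k] A}
    (hTA : ∀ c : A, LinearMap.mul' k A (T.rTensor A (Coalgebra.comul c)) = ε c • (1:A))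
    {c : A} (r : Repr k c (A × A)) :
    ∑ j ∈ r.index, T (r.left j) * r.right j = ε c • (1:A) := by
  have h := hTA c
  rw [← r.eq] at h
  simpa only [map_sum, LinearMap.rTensor_tmul, LinearMap.mul'_apply] using h

/-- Key "Casimir"-type identity for a left integral, chirality A. -/
lemma tl1A (hint : ∀ a : A, a * θ = ε a • θ)
    (hTm : ∀ x y : A, T (x * y) = T y * T x)
    (hTA : ∀ c : A, LinearMap.mul' k A (T.rTensor A (Coalgebra.comul c)) = ε c • (1:A))
    (x : A) :
    ∑ m ∈ rθ.index, (x * rθ.left m) ⊗ₜ[k] T (rθ.right m)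
    = ∑ m ∈ rθ.index, rθ.left m ⊗ₜ[k] (T (rθ.right m) * x) := by
  classical
  set rx : Repr k x (A × A) := ℛ k x with hrx
  set rx1 : ∀ i, Repr k (rx.left i) (A × A) := fun i => ℛ k _ with hrx1
  set rx2 : ∀ i, Repr k (rx.right i) (A × A) := fun i => ℛ k _ with hrx2
  set V : A ⊗[k] A := ∑ i ∈ rx.index, ∑ j ∈ (rx2 i).index, ∑ m ∈ rθ.index,
      ((rx.left i * rθ.left m) ⊗ₜ[k] (T ((rx2 i).left j * rθ.right m) * (rx2 i).right j))
    with hV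
  have chainR : V = ∑ m ∈ rθ.index, (x * rθ.left m) ⊗ₜ[k] T (rθ.right m) := by
    have hij : ∀ i, ∑ j ∈ (rx2 i).index, ∑ m ∈ rθ.index,
        ((rx.left i * rθ.left m) ⊗ₜ[k] (T ((rx2 i).left j * rθ.right m) * (rx2 i).right j))
        = ε (rx.right i) • ∑ m ∈ rθ.index,
            ((rx.left i * rθ.left m) ⊗ₜ[k] T (rθ.right m)) := by
      intro i
      calc ∑ j ∈ (rx2 i).index, ∑ m ∈ rθ.index,
            ((rx.left i * rθ.left m) ⊗ₜ[k] (T ((rx2 i).left j * rθ.right m) * (rx2 i).right j))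
          = ∑ m ∈ rθ.index, ∑ j ∈ (rx2 i).index,
            ((rx.left i * rθ.left m) ⊗ₜ[k] (T ((rx2 i).left j * rθ.right m) * (rx2 i).right j)) :=
            Finset.sum_comm
        _ = ∑ m ∈ rθ.index, ε (rx.right i) • ((rx.left i * rθ.left m) ⊗ₜ[k] T (rθ.right m)) := by
            refine Finset.sum_congr rfl fun m _ => ?_
            have e1 : ∀ j, ((rx.left i * rθ.left m) ⊗ₜ[k]
                  (T ((rx2 i).left j * rθ.right m) * (rx2 i).right j))
                = ((rx.left i * rθ.left m) ⊗ₜ[k]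
                  (T (rθ.right m) * (T ((rx2 i).left j) * (rx2 i).right j))) := by
              intro j; rw [hTm, mul_assoc]
            have hs := sum_T_mul hTA (rx2 i)
            rw [Finset.sum_congr rfl fun j _ => e1 j, ← TensorProduct.tmul_sum, ← Finset.mul_sum,
              hs, mul_smul_comm, mul_one, TensorProduct.tmul_smul]
        _ = ε (rx.right i) • ∑ m ∈ rθ.index,
            ((rx.left i * rθ.left m) ⊗ₜ[k] T (rθ.right m)) := (Finset.smul_sum).symm
    rw [hV, Finset.sum_congr rfl fun i _ => hij i]
    calc ∑ i ∈ rx.index, ε (rx.right i) •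
            ∑ m ∈ rθ.index, ((rx.left i * rθ.left m) ⊗ₜ[k] T (rθ.right m))
        = ∑ i ∈ rx.index, ∑ m ∈ rθ.index,
            ε (rx.right i) • ((rx.left i * rθ.left m) ⊗ₜ[k] T (rθ.right m)) :=
          Finset.sum_congr rfl fun i _ => Finset.smul_sum
      _ = ∑ m ∈ rθ.index, ∑ i ∈ rx.index,
            ε (rx.right i) • ((rx.left i * rθ.left m) ⊗ₜ[k] T (rθ.right m)) := Finset.sum_comm
      _ = ∑ m ∈ rθ.index, (x * rθ.left m) ⊗ₜ[k] T (rθ.right m) := by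
          refine Finset.sum_congr rfl fun m _ => ?_
          have h := congrArg (((TensorProduct.mk k A A).flip (T (rθ.right m))) ∘ₗ
            LinearMap.mulRight k (rθ.left m)) (repr_counit_right rx)
          simpa only [map_sum, map_smul, LinearMap.coe_comp, Function.comp_apply,
            LinearMap.mulRight_apply, LinearMap.flip_apply, TensorProduct.mk_apply] using h
  have chainL : V = ∑ m ∈ rθ.index, rθ.left m ⊗ₜ[k] (T (rθ.right m) * x) := by
    have hVswap : V = ∑ m ∈ rθ.index, ∑ i ∈ rx.index, ∑ j ∈ (rx2 i).index,
        ((rx.left i * rθ.left m) ⊗ₜ[k] (T ((rx2 i).left j * rθ.right m) * (rx2 i).right j)) := by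
      rw [hV]; exact sum3_swap _ _ _ _
    have hex : ∀ m ∈ rθ.index, ∑ i ∈ rx.index, ∑ j ∈ (rx1 i).index,
        (((rx1 i).left j * rθ.left m) ⊗ₜ[k] (T ((rx1 i).right j * rθ.right m) * rx.right i))
        = ∑ i ∈ rx.index, ∑ j ∈ (rx2 i).index,
        ((rx.left i * rθ.left m) ⊗ₜ[k] (T ((rx2 i).left j * rθ.right m) * (rx2 i).right j)) := by
      intro m _
      have h := triple_exchange rx rx1 rx2
        (TensorProduct.map (LinearMap.mulRight k (rθ.left m))
          (LinearMap.mul' k A ∘ₗ TensorProduct.map (T ∘ₗ LinearMap.mulRight k (rθ.right m))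
            LinearMap.id))
      simpa only [LinearMap.coe_comp, Function.comp_apply, TensorProduct.map_tmul,
        LinearMap.mul'_apply, LinearMap.mulRight_apply, LinearMap.id_coe, id_eq] using h
    have hV2 : V = ∑ i ∈ rx.index, ∑ j ∈ (rx1 i).index, ∑ m ∈ rθ.index,
        (((rx1 i).left j * rθ.left m) ⊗ₜ[k] (T ((rx1 i).right j * rθ.right m) * rx.right i)) := by
      rw [hVswap, Finset.sum_congr rfl fun m hm => (hex m hm).symm, ← sum3_swap]
    have hti : ∀ i, ∑ j ∈ (rx1 i).index, ∑ m ∈ rθ.index,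
        (((rx1 i).left j * rθ.left m) ⊗ₜ[k] (T ((rx1 i).right j * rθ.right m) * rx.right i))
        = ε (rx.left i) • ∑ m ∈ rθ.index, rθ.left m ⊗ₜ[k] (T (rθ.right m) * rx.right i) := by
      intro i
      have htensor : ∑ j ∈ (rx1 i).index, ∑ m ∈ rθ.index,
          (((rx1 i).left j * rθ.left m) ⊗ₜ[k] ((rx1 i).right j * rθ.right m))
          = ε (rx.left i) • ∑ m ∈ rθ.index, rθ.left m ⊗ₜ[k] rθ.right m := by
        have h := (reprMul (rx1 i) rθ).eq
        simp only [reprMul_index, reprMul_left, reprMul_right] at h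
        have h2 : Coalgebra.comul (R := k) (rx.left i * θ)
            = ε (rx.left i) • ∑ m ∈ rθ.index, rθ.left m ⊗ₜ[k] rθ.right m := by
          rw [hint (rx.left i), map_smul, ← rθ.eq]
        rw [← Finset.sum_product']
        exact h.trans h2
      have h3 := congrArg (TensorProduct.map LinearMap.id
        (LinearMap.mulRight k (rx.right i) ∘ₗ T)) htensor
      simpa only [map_sum, map_smul, TensorProduct.map_tmul, LinearMap.coe_comp,
        Function.comp_apply, LinearMap.mulRight_apply, LinearMap.id_coe, id_eq] using h3
    rw [hV2, Finset.sum_congr rfl fun i _ => hti i]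
    calc ∑ i ∈ rx.index, ε (rx.left i) •
            ∑ m ∈ rθ.index, rθ.left m ⊗ₜ[k] (T (rθ.right m) * rx.right i)
        = ∑ i ∈ rx.index, ∑ m ∈ rθ.index,
            ε (rx.left i) • (rθ.left m ⊗ₜ[k] (T (rθ.right m) * rx.right i)) :=
          Finset.sum_congr rfl fun i _ => Finset.smul_sum
      _ = ∑ m ∈ rθ.index, ∑ i ∈ rx.index,
            ε (rx.left i) • (rθ.left m ⊗ₜ[k] (T (rθ.right m) * rx.right i)) := Finset.sum_comm
      _ = ∑ m ∈ rθ.index, rθ.left m ⊗ₜ[k] (T (rθ.right m) * x) := by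
          refine Finset.sum_congr rfl fun m _ => ?_
          have h := congrArg ((TensorProduct.mk k A A (rθ.left m)) ∘ₗ
            LinearMap.mulLeft k (T (rθ.right m))) (repr_counit_left rx)
          simpa only [map_sum, map_smul, LinearMap.coe_comp, Function.comp_apply,
            LinearMap.mulLeft_apply, TensorProduct.mk_apply] using h
  rw [← chainR, chainL]

/-- Second identity: collapses to `θ ⊗ 1`. -/
lemma tl2A (hTm : ∀ x y : A, T (x * y) = T y * T x) (hT1 : T 1 = 1)
    (hTA : ∀ c : A, LinearMap.mul' k A (T.rTensor A (Coalgebra.comul c)) = ε c • (1:A))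
    (rθ1 : ∀ i, Repr k (rθ.left i) (A × A)) (rθ2 : ∀ i, Repr k (rθ.right i) (A × A)) :
    ∑ i ∈ rθ.index, ∑ j ∈ (rθ1 i).index,
      (rθ1 i).left j ⊗ₜ[k] (T (rθ.right i) * T (T ((rθ1 i).right j)))
    = θ ⊗ₜ[k] (1 : A) := by
  classical
  have hex := triple_exchange rθ rθ1 rθ2
    (TensorProduct.map LinearMap.id
      (LinearMap.mul' k A ∘ₗ TensorProduct.map T (T ∘ₗ T) ∘ₗ
        (TensorProduct.comm k A A).toLinearMap))
  simp only [LinearMap.coe_comp, Function.comp_apply, LinearEquiv.coe_coe,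
    TensorProduct.comm_tmul, TensorProduct.map_tmul, LinearMap.mul'_apply,
    LinearMap.id_coe, id_eq] at hex
  rw [hex]
  have hcol : ∀ i, ∑ j ∈ (rθ2 i).index,
      rθ.left i ⊗ₜ[k] (T ((rθ2 i).right j) * T (T ((rθ2 i).left j)))
      = ε (rθ.right i) • (rθ.left i ⊗ₜ[k] (1 : A)) := by
    intro i
    have e1 : ∀ j, rθ.left i ⊗ₜ[k] (T ((rθ2 i).right j) * T (T ((rθ2 i).left j)))
        = rθ.left i ⊗ₜ[k] T (T ((rθ2 i).left j) * (rθ2 i).right j) := by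
      intro j; rw [hTm]
    rw [Finset.sum_congr rfl fun j _ => e1 j, ← TensorProduct.tmul_sum, ← map_sum,
      sum_T_mul hTA (rθ2 i), map_smul, hT1, TensorProduct.tmul_smul]
  rw [Finset.sum_congr rfl fun i _ => hcol i]
  have h := congrArg ((TensorProduct.mk k A A).flip (1 : A)) (repr_counit_right rθ)
  simpa only [map_sum, map_smul, LinearMap.flip_apply, TensorProduct.mk_apply] using h

/-- The auxiliary bilinear map used in the final contraction. -/
noncomputable def rcomulMap (w : A →ₗ[k] A) : Module.Dual k A →ₗ[k] A →ₗ[k] A where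
  toFun h := (TensorProduct.rid k A).toLinearMap ∘ₗ
    LinearMap.lTensor A (h ∘ₗ w) ∘ₗ Coalgebra.comul (R := k)
  map_add' h h' := by
    ext m
    simp [LinearMap.add_comp, LinearMap.comp_add, LinearMap.lTensor_add]
  map_smul' c h := by
    ext m
    simp [LinearMap.smul_comp, LinearMap.comp_smul, LinearMap.lTensor_smul]

lemma rcomulMap_apply (w : A →ₗ[k] A) (h : Module.Dual k A) {m : A} (r : Repr k m (A × A)) :
    rcomulMap w h m = ∑ j ∈ r.index, h (w (r.right j)) • r.left j := by
  simp only [rcomulMap, LinearMap.coe_mk, AddHom.coe_mk, LinearMap.coe_comp,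
    Function.comp_apply, LinearEquiv.coe_coe]
  rw [← r.eq]
  simp only [map_sum, LinearMap.lTensor_tmul, LinearMap.coe_comp, Function.comp_apply,
    TensorProduct.rid_tmul]

/-- Injectivity of `u ↦ ∑ u(T θ⁽²⁾) θ⁽¹⁾` for a nonzero left integral `θ`, chirality A. -/
lemma dual_inj_A [FiniteDimensional k A] (hθ0 : θ ≠ 0)
    (hint : ∀ a : A, a * θ = ε a • θ)
    (hT1 : T 1 = 1) (hTm : ∀ x y : A, T (x * y) = T y * T x)
    (hTA : ∀ c : A, LinearMap.mul' k A (T.rTensor A (Coalgebra.comul c)) = ε c • (1:A))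
    (u : Module.Dual k A)
    (hu : ∑ m ∈ rθ.index, u (T (rθ.right m)) • rθ.left m = 0) : u = 0 := by
  classical
  set rθ1 : ∀ i, Repr k (rθ.left i) (A × A) := fun i => ℛ k _ with hrθ1
  -- Step 1
  have step1 : ∀ x : A, ∑ m ∈ rθ.index, u (T (rθ.right m) * x) • rθ.left m = 0 := by
    intro x
    have h := congrArg ((TensorProduct.rid k A).toLinearMap ∘ₗ (LinearMap.lTensor A u))
      (tl1A θ T rθ hint hTm hTA x)
    simp only [map_sum, LinearMap.coe_comp, Function.comp_apply, LinearMap.lTensor_tmul,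
      LinearEquiv.coe_coe, TensorProduct.rid_tmul] at h
    have h2 := congrArg (LinearMap.mulLeft k x) hu
    simp only [map_sum, map_smul, LinearMap.mulLeft_apply, mul_zero] at h2
    exact h.symm.trans h2
  -- Step 2 : the tensor `Z` vanishes
  set Z : Module.Dual k A ⊗[k] A := ∑ m ∈ rθ.index,
      (u ∘ₗ LinearMap.mulLeft k (T (rθ.right m))) ⊗ₜ[k] rθ.left m with hZdef
  have hZhom : dualTensorHom k A A Z = 0 := by
    apply LinearMap.ext; intro x
    simp only [hZdef, map_sum, dualTensorHom_apply, LinearMap.sum_apply, LinearMap.coe_comp,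
      Function.comp_apply, LinearMap.mulLeft_apply, LinearMap.zero_apply]
    exact step1 x
  have hZ : Z = 0 := by
    have hcan := dualTensorHomEquivOfBasis_symm_cancel_left
      (b := Module.Free.chooseBasis k A) (N := A) Z
    rw [hZhom, map_zero] at hcan
    exact hcan.symm
  -- Step 3 : contract against `tl2A`
  apply LinearMap.ext; intro z
  have h3 := congrArg (TensorProduct.lift
    (rcomulMap (LinearMap.mulRight k z ∘ₗ T ∘ₗ T))) hZ
  simp only [hZdef, map_sum, map_zero, TensorProduct.lift.tmul] at h3
  rw [Finset.sum_congr rfl (fun m _ => rcomulMap_apply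
    (LinearMap.mulRight k z ∘ₗ T ∘ₗ T) _ (rθ1 m))] at h3
  simp only [LinearMap.coe_comp, Function.comp_apply, LinearMap.mulRight_apply,
    LinearMap.mulLeft_apply] at h3
  -- h3 : ∑ m ∑ j u (T θR m * (T (T (rθ1 m).right j) * z)) • (rθ1 m).left j = 0
  have h4 := congrArg ((TensorProduct.rid k A).toLinearMap ∘ₗ
      (LinearMap.lTensor A (u ∘ₗ LinearMap.mulRight k z)))
    (tl2A θ T rθ hTm hT1 hTA rθ1 (fun i => ℛ k _))
  simp only [map_sum, LinearMap.coe_comp, Function.comp_apply, LinearMap.lTensor_tmul,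
    LinearEquiv.coe_coe, TensorProduct.rid_tmul, LinearMap.mulRight_apply] at h4
  -- h4 : ∑ i ∑ j u ((T θR i * T (T (rθ1 i).right j)) * z) • (rθ1 i).left j = u (1 * z) • θ
  have e5 : ∀ m j, u (T (rθ.right m) * (T (T ((rθ1 m).right j)) * z)) •
        ((rθ1 m).left j)
      = u ((T (rθ.right m) * T (T ((rθ1 m).right j))) * z) • ((rθ1 m).left j) := by
    intro m j; rw [mul_assoc]
  rw [Finset.sum_congr rfl fun m _ => Finset.sum_congr rfl fun j _ => e5 m j, h4,
    one_mul] at h3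
  have := smul_eq_zero.mp h3
  simp only [LinearMap.zero_apply]
  exact (this.resolve_right hθ0)
-- Mirror (chirality B) versions, for the co-opposite antipode `T` (with `∑ T(a₂)a₁ = ε(a)1`).

lemma sum_T_mul_B {T : A →ₗ[k] A}
    (hTB : ∀ c : A, LinearMap.mul' k A ((TensorProduct.map T LinearMap.id)
      ((TensorProduct.comm k A A) (Coalgebra.comul (R := k) c))) = ε c • (1:A))
    {c : A} (r : Repr k c (A × A)) :
    ∑ j ∈ r.index, T (r.right j) * r.left j = ε c • (1:A) := by
  have h := hTB c
  rw [← r.eq] at h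
  simpa only [map_sum, TensorProduct.comm_tmul, TensorProduct.map_tmul,
    LinearMap.mul'_apply, LinearMap.id_coe, id_eq] using h

lemma tl1B (hint : ∀ a : A, a * θ = ε a • θ)
    (hTm : ∀ x y : A, T (x * y) = T y * T x)
    (hTB : ∀ c : A, LinearMap.mul' k A ((TensorProduct.map T LinearMap.id)
      ((TensorProduct.comm k A A) (Coalgebra.comul (R := k) c))) = ε c • (1:A))
    (x : A) :
    ∑ m ∈ rθ.index, (T (rθ.left m) * x) ⊗ₜ[k] rθ.right m
    = ∑ m ∈ rθ.index, T (rθ.left m) ⊗ₜ[k] (x * rθ.right m) := by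
  classical
  set rx : Repr k x (A × A) := ℛ k x with hrx
  set rx1 : ∀ i, Repr k (rx.left i) (A × A) := fun i => ℛ k _ with hrx1
  set rx2 : ∀ i, Repr k (rx.right i) (A × A) := fun i => ℛ k _ with hrx2
  set V : A ⊗[k] A := ∑ i ∈ rx.index, ∑ j ∈ (rx2 i).index, ∑ m ∈ rθ.index,
      ((T ((rx2 i).left j * rθ.left m) * rx.left i) ⊗ₜ[k] ((rx2 i).right j * rθ.right m))
    with hV
  have chainL : V = ∑ m ∈ rθ.index, (T (rθ.left m) * x) ⊗ₜ[k] rθ.right m := by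
    have hti : ∀ i, ∑ j ∈ (rx2 i).index, ∑ m ∈ rθ.index,
        ((T ((rx2 i).left j * rθ.left m) * rx.left i) ⊗ₜ[k] ((rx2 i).right j * rθ.right m))
        = ε (rx.right i) • ∑ m ∈ rθ.index,
            (T (rθ.left m) * rx.left i) ⊗ₜ[k] rθ.right m := by
      intro i
      have htensor : ∑ j ∈ (rx2 i).index, ∑ m ∈ rθ.index,
          (((rx2 i).left j * rθ.left m) ⊗ₜ[k] ((rx2 i).right j * rθ.right m))
          = ε (rx.right i) • ∑ m ∈ rθ.index, rθ.left m ⊗ₜ[k] rθ.right m := by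
        have h := (reprMul (rx2 i) rθ).eq
        simp only [reprMul_index, reprMul_left, reprMul_right] at h
        have h2 : Coalgebra.comul (R := k) (rx.right i * θ)
            = ε (rx.right i) • ∑ m ∈ rθ.index, rθ.left m ⊗ₜ[k] rθ.right m := by
          rw [hint (rx.right i), map_smul, ← rθ.eq]
        rw [← Finset.sum_product']
        exact h.trans h2
      have h3 := congrArg (TensorProduct.map
        (LinearMap.mulRight k (rx.left i) ∘ₗ T) LinearMap.id) htensor
      simpa only [map_sum, map_smul, TensorProduct.map_tmul, LinearMap.coe_comp,
        Function.comp_apply, LinearMap.mulRight_apply, LinearMap.id_coe, id_eq] using h3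
    rw [hV, Finset.sum_congr rfl fun i _ => hti i]
    calc ∑ i ∈ rx.index, ε (rx.right i) •
            ∑ m ∈ rθ.index, (T (rθ.left m) * rx.left i) ⊗ₜ[k] rθ.right m
        = ∑ i ∈ rx.index, ∑ m ∈ rθ.index,
            ε (rx.right i) • ((T (rθ.left m) * rx.left i) ⊗ₜ[k] rθ.right m) :=
          Finset.sum_congr rfl fun i _ => Finset.smul_sum
      _ = ∑ m ∈ rθ.index, ∑ i ∈ rx.index,
            ε (rx.right i) • ((T (rθ.left m) * rx.left i) ⊗ₜ[k] rθ.right m) := Finset.sum_comm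
      _ = ∑ m ∈ rθ.index, (T (rθ.left m) * x) ⊗ₜ[k] rθ.right m := by
          refine Finset.sum_congr rfl fun m _ => ?_
          have h := congrArg (((TensorProduct.mk k A A).flip (rθ.right m)) ∘ₗ
            LinearMap.mulLeft k (T (rθ.left m))) (repr_counit_right rx)
          simpa only [map_sum, map_smul, LinearMap.coe_comp, Function.comp_apply,
            LinearMap.mulLeft_apply, LinearMap.flip_apply, TensorProduct.mk_apply] using h
  have chainR : V = ∑ m ∈ rθ.index, T (rθ.left m) ⊗ₜ[k] (x * rθ.right m) := by
    have hVswap : V = ∑ m ∈ rθ.index, ∑ i ∈ rx.index, ∑ j ∈ (rx2 i).index,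
        ((T ((rx2 i).left j * rθ.left m) * rx.left i) ⊗ₜ[k] ((rx2 i).right j * rθ.right m)) := by
      rw [hV]; exact sum3_swap _ _ _ _
    have hex : ∀ m ∈ rθ.index, ∑ i ∈ rx.index, ∑ j ∈ (rx1 i).index,
        ((T ((rx1 i).right j * rθ.left m) * (rx1 i).left j) ⊗ₜ[k] (rx.right i * rθ.right m))
        = ∑ i ∈ rx.index, ∑ j ∈ (rx2 i).index,
        ((T ((rx2 i).left j * rθ.left m) * rx.left i) ⊗ₜ[k] ((rx2 i).right j * rθ.right m)) := by
      intro m _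
      have h := triple_exchange rx rx1 rx2
        (TensorProduct.map
          (LinearMap.mul' k A ∘ₗ
            TensorProduct.map (T ∘ₗ LinearMap.mulRight k (rθ.left m)) LinearMap.id ∘ₗ
            (TensorProduct.comm k A A).toLinearMap)
          (LinearMap.mulRight k (rθ.right m)) ∘ₗ
         (TensorProduct.assoc k A A A).symm.toLinearMap)
      simpa only [LinearMap.coe_comp, Function.comp_apply, LinearEquiv.coe_coe,
        TensorProduct.assoc_symm_tmul, TensorProduct.comm_tmul, TensorProduct.map_tmul,
        LinearMap.mul'_apply, LinearMap.mulRight_apply, LinearMap.id_coe, id_eq] using h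
    have hcol : ∀ m ∈ rθ.index, ∀ i, ∑ j ∈ (rx1 i).index,
        ((T ((rx1 i).right j * rθ.left m) * (rx1 i).left j) ⊗ₜ[k] (rx.right i * rθ.right m))
        = ε (rx.left i) • (T (rθ.left m) ⊗ₜ[k] (rx.right i * rθ.right m)) := by
      intro m _ i
      have e1 : ∀ j, (T ((rx1 i).right j * rθ.left m) * (rx1 i).left j)
          = T (rθ.left m) * (T ((rx1 i).right j) * (rx1 i).left j) := by
        intro j; rw [hTm, mul_assoc]
      calc ∑ j ∈ (rx1 i).index,
            ((T ((rx1 i).right j * rθ.left m) * (rx1 i).left j) ⊗ₜ[k]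
              (rx.right i * rθ.right m))
          = (T (rθ.left m) * ∑ j ∈ (rx1 i).index, T ((rx1 i).right j) * (rx1 i).left j)
              ⊗ₜ[k] (rx.right i * rθ.right m) := by
            rw [Finset.sum_congr rfl fun j _ => by rw [e1 j], ← TensorProduct.sum_tmul,
              ← Finset.mul_sum]
        _ = ε (rx.left i) • (T (rθ.left m) ⊗ₜ[k] (rx.right i * rθ.right m)) := by
            rw [sum_T_mul_B hTB (rx1 i), mul_smul_comm, mul_one, TensorProduct.smul_tmul']
    rw [hVswap, Finset.sum_congr rfl fun m hm => (hex m hm).symm,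
      Finset.sum_congr rfl fun m hm => Finset.sum_congr rfl fun i _ => hcol m hm i]
    refine Finset.sum_congr rfl fun m _ => ?_
    have h := congrArg ((TensorProduct.mk k A A (T (rθ.left m))) ∘ₗ
      LinearMap.mulRight k (rθ.right m)) (repr_counit_left rx)
    simpa only [map_sum, map_smul, LinearMap.coe_comp, Function.comp_apply,
      LinearMap.mulRight_apply, TensorProduct.mk_apply] using h
  rw [← chainL, chainR]

lemma tl2B (hTm : ∀ x y : A, T (x * y) = T y * T x) (hT1 : T 1 = 1)
    (hTB : ∀ c : A, LinearMap.mul' k A ((TensorProduct.map T LinearMap.id)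
      ((TensorProduct.comm k A A) (Coalgebra.comul (R := k) c))) = ε c • (1:A))
    (rθ1 : ∀ i, Repr k (rθ.left i) (A × A)) (rθ2 : ∀ i, Repr k (rθ.right i) (A × A)) :
    ∑ i ∈ rθ.index, ∑ j ∈ (rθ2 i).index,
      (T (rθ.left i) * T (T ((rθ2 i).left j))) ⊗ₜ[k] (rθ2 i).right j
    = (1 : A) ⊗ₜ[k] θ := by
  classical
  have hex := triple_exchange rθ rθ1 rθ2
    (TensorProduct.map (LinearMap.mul' k A ∘ₗ TensorProduct.map T (T ∘ₗ T)) LinearMap.id ∘ₗ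
      (TensorProduct.assoc k A A A).symm.toLinearMap)
  simp only [LinearMap.coe_comp, Function.comp_apply, LinearEquiv.coe_coe,
    TensorProduct.assoc_symm_tmul, TensorProduct.map_tmul, LinearMap.mul'_apply,
    LinearMap.id_coe, id_eq] at hex
  rw [← hex]
  have hcol : ∀ i, ∑ j ∈ (rθ1 i).index,
      (T ((rθ1 i).left j) * T (T ((rθ1 i).right j))) ⊗ₜ[k] rθ.right i
      = ε (rθ.left i) • ((1 : A) ⊗ₜ[k] rθ.right i) := by
    intro i
    have e1 : ∀ j, T ((rθ1 i).left j) * T (T ((rθ1 i).right j))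
        = T (T ((rθ1 i).right j) * (rθ1 i).left j) := by
      intro j; rw [hTm]
    rw [Finset.sum_congr rfl fun j _ => by rw [e1 j], ← TensorProduct.sum_tmul, ← map_sum,
      sum_T_mul_B hTB (rθ1 i), map_smul, hT1, TensorProduct.smul_tmul']
  rw [Finset.sum_congr rfl fun i _ => hcol i]
  have h := congrArg (TensorProduct.mk k A A (1 : A)) (repr_counit_left rθ)
  simpa only [map_sum, map_smul, TensorProduct.mk_apply] using h

/-- The mirror auxiliary bilinear map. -/
noncomputable def lcomulMap (w : A →ₗ[k] A) : Module.Dual k A →ₗ[k] A →ₗ[k] A where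
  toFun h := (TensorProduct.lid k A).toLinearMap ∘ₗ
    LinearMap.rTensor A (h ∘ₗ w) ∘ₗ Coalgebra.comul (R := k)
  map_add' h h' := by
    ext m
    simp [LinearMap.add_comp, LinearMap.comp_add, LinearMap.rTensor_add]
  map_smul' c h := by
    ext m
    simp [LinearMap.smul_comp, LinearMap.comp_smul, LinearMap.rTensor_smul]

lemma lcomulMap_apply (w : A →ₗ[k] A) (h : Module.Dual k A) {m : A} (r : Repr k m (A × A)) :
    lcomulMap w h m = ∑ j ∈ r.index, h (w (r.left j)) • r.right j := by
  simp only [lcomulMap, LinearMap.coe_mk, AddHom.coe_mk, LinearMap.coe_comp,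
    Function.comp_apply, LinearEquiv.coe_coe]
  rw [← r.eq]
  simp only [map_sum, LinearMap.rTensor_tmul, LinearMap.coe_comp, Function.comp_apply,
    TensorProduct.lid_tmul]

/-- Injectivity of `u ↦ ∑ u(T θ⁽¹⁾) θ⁽²⁾`, chirality B. -/
lemma dual_inj_B [FiniteDimensional k A] (hθ0 : θ ≠ 0)
    (hint : ∀ a : A, a * θ = ε a • θ)
    (hT1 : T 1 = 1) (hTm : ∀ x y : A, T (x * y) = T y * T x)
    (hTB : ∀ c : A, LinearMap.mul' k A ((TensorProduct.map T LinearMap.id)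
      ((TensorProduct.comm k A A) (Coalgebra.comul (R := k) c))) = ε c • (1:A))
    (u : Module.Dual k A)
    (hu : ∑ m ∈ rθ.index, u (T (rθ.left m)) • rθ.right m = 0) : u = 0 := by
  classical
  set rθ2 : ∀ i, Repr k (rθ.right i) (A × A) := fun i => ℛ k _ with hrθ2
  have step1 : ∀ x : A, ∑ m ∈ rθ.index, u (T (rθ.left m) * x) • rθ.right m = 0 := by
    intro x
    have h := congrArg ((TensorProduct.lid k A).toLinearMap ∘ₗ (LinearMap.rTensor A u))
      (tl1B θ T rθ hint hTm hTB x)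
    simp only [map_sum, LinearMap.coe_comp, Function.comp_apply, LinearMap.rTensor_tmul,
      LinearEquiv.coe_coe, TensorProduct.lid_tmul] at h
    have h2 := congrArg (LinearMap.mulLeft k x) hu
    simp only [map_sum, map_smul, LinearMap.mulLeft_apply, mul_zero] at h2
    exact h.trans h2
  set Z : Module.Dual k A ⊗[k] A := ∑ m ∈ rθ.index,
      (u ∘ₗ LinearMap.mulLeft k (T (rθ.left m))) ⊗ₜ[k] rθ.right m with hZdef
  have hZhom : dualTensorHom k A A Z = 0 := by
    apply LinearMap.ext; intro x
    simp only [hZdef, map_sum, dualTensorHom_apply, LinearMap.sum_apply, LinearMap.coe_comp,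
      Function.comp_apply, LinearMap.mulLeft_apply, LinearMap.zero_apply]
    exact step1 x
  have hZ : Z = 0 := by
    have hcan := dualTensorHomEquivOfBasis_symm_cancel_left
      (b := Module.Free.chooseBasis k A) (N := A) Z
    rw [hZhom, map_zero] at hcan
    exact hcan.symm
  apply LinearMap.ext; intro z
  have h3 := congrArg (TensorProduct.lift
    (lcomulMap (LinearMap.mulRight k z ∘ₗ T ∘ₗ T))) hZ
  simp only [hZdef, map_sum, map_zero, TensorProduct.lift.tmul] at h3
  rw [Finset.sum_congr rfl (fun m _ => lcomulMap_apply
    (LinearMap.mulRight k z ∘ₗ T ∘ₗ T) _ (rθ2 m))] at h3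
  simp only [LinearMap.coe_comp, Function.comp_apply, LinearMap.mulRight_apply,
    LinearMap.mulLeft_apply] at h3
  have h4 := congrArg ((TensorProduct.lid k A).toLinearMap ∘ₗ
      (LinearMap.rTensor A (u ∘ₗ LinearMap.mulRight k z)))
    (tl2B θ T rθ hTm hT1 hTB (fun i => ℛ k _) rθ2)
  simp only [map_sum, LinearMap.coe_comp, Function.comp_apply, LinearMap.rTensor_tmul,
    LinearEquiv.coe_coe, TensorProduct.lid_tmul, LinearMap.mulRight_apply] at h4
  have e5 : ∀ m j, u (T (rθ.left m) * (T (T ((rθ2 m).left j)) * z)) • ((rθ2 m).right j)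
      = u ((T (rθ.left m) * T (T ((rθ2 m).left j))) * z) • ((rθ2 m).right j) := by
    intro m j; rw [mul_assoc]
  rw [Finset.sum_congr rfl fun m _ => Finset.sum_congr rfl fun j _ => e5 m j, h4,
    one_mul] at h3
  have := smul_eq_zero.mp h3
  simp only [LinearMap.zero_apply]
  exact (this.resolve_right hθ0)

end Core

section Final

variable [FiniteDimensional k A]

lemma hSA : ∀ c : A, LinearMap.mul' k A ((HopfAlgebra.antipode (R := k) (A := A)).rTensor A (Coalgebra.comul c)) = ε c • (1:A) := by
  intro c
  rw [HopfAlgebra.mul_antipode_rTensor_comul_apply, Algebra.algebraMap_eq_smul_one]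

lemma antipode_mul' : ∀ x y : A, 𝒮 (x * y) = 𝒮 y * 𝒮 x := fun x y => antipode_mul x y

/-- The antipode of a f.d. Hopf algebra possessing a nonzero left integral is surjective. -/
lemma antipode_surjective (θ : A) (hθ0 : θ ≠ 0) (hint : ∀ a : A, a * θ = ε a • θ) :
    Function.Surjective (𝒮 : A →ₗ[k] A) := by
  rw [← LinearMap.range_eq_top]
  by_contra hne
  obtain ⟨u, hu0, hann⟩ := Submodule.exists_dual_map_eq_bot_of_lt_top
    (lt_top_iff_ne_top.mpr hne) inferInstance
  have hvan : ∀ y : A, u (𝒮 y) = 0 := by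
    intro y
    have : u (𝒮 y) ∈ Submodule.map u (LinearMap.range (𝒮 : A →ₗ[k] A)) :=
      Submodule.mem_map_of_mem (LinearMap.mem_range_self _ y)
    rw [hann] at this
    simpa using this
  have := dual_inj_A θ 𝒮 (ℛ k θ) hθ0 hint antipode_one antipode_mul' hSA u
    (by simp [hvan])
  exact hu0 this

lemma antipode_injective (θ : A) (hθ0 : θ ≠ 0) (hint : ∀ a : A, a * θ = ε a • θ) :
    Function.Injective (𝒮 : A →ₗ[k] A) :=
  LinearMap.injective_iff_surjective.mpr (antipode_surjective θ hθ0 hint)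

section Inverse

lemma exists_Tinv (θ : A) (hθ0 : θ ≠ 0) (hint : ∀ a : A, a * θ = ε a • θ) :
    ∃ T : A →ₗ[k] A,
    (∀ x, 𝒮 (T x) = x) ∧ (∀ x, T (𝒮 x) = x) ∧ T 1 = 1 ∧
    (∀ x y, T (x * y) = T y * T x) ∧
    (∀ c : A, LinearMap.mul' k A ((TensorProduct.map T LinearMap.id)
      ((TensorProduct.comm k A A) (Coalgebra.comul (R := k) c))) = ε c • (1:A)) := by
  have hbij : Function.Bijective (𝒮 : A →ₗ[k] A) :=
    ⟨antipode_injective θ hθ0 hint, antipode_surjective θ hθ0 hint⟩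
  set e := LinearEquiv.ofBijective (𝒮 : A →ₗ[k] A) hbij with he
  refine ⟨e.symm.toLinearMap, fun x => e.apply_symm_apply x, fun x => e.symm_apply_apply x,
    ?_, ?_, ?_⟩
  · apply hbij.1
    show 𝒮 (e.symm 1) = 𝒮 1
    rw [show 𝒮 (e.symm 1) = e (e.symm 1) from rfl, e.apply_symm_apply, antipode_one]
  · intro x y
    apply hbij.1
    show 𝒮 (e.symm (x * y)) = 𝒮 (e.symm y * e.symm x)
    rw [show ∀ z, 𝒮 (e.symm z) = e (e.symm z) from fun z => rfl, e.apply_symm_apply,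
      antipode_mul]
    rw [show (𝒮 (e.symm x) : A) = e (e.symm x) from rfl,
      show (𝒮 (e.symm y) : A) = e (e.symm y) from rfl,
      e.apply_symm_apply, e.apply_symm_apply]
  · intro c
    set r : Repr k c (A × A) := ℛ k c with hr
    rw [← r.eq]
    simp only [map_sum, TensorProduct.comm_tmul, TensorProduct.map_tmul,
      LinearMap.mul'_apply, LinearMap.id_coe, id_eq, LinearEquiv.coe_coe]
    apply hbij.1
    rw [map_sum, map_smul, antipode_one]
    calc ∑ j ∈ r.index, 𝒮 (e.symm (r.right j) * r.left j)
        = ∑ j ∈ r.index, 𝒮 (r.left j) * r.right j := by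
          refine Finset.sum_congr rfl fun j _ => ?_
          rw [antipode_mul]
          congr 1
          exact e.apply_symm_apply (r.right j)
      _ = ε c • (1 : A) := sum_T_mul hSA r

end Inverse

end Final

end HopfAux

/-- **Non-degeneracy of the unit form `κ_θ`.**  `A` is a finite-dimensional
Hopf algebra over a field `k` of characteristic ≠ 2 and `θ` is a generator of
the one-dimensional space of left integrals of `A` (`a·θ = ε(a)·θ`).  Then
the bilinear form `κ_θ(u, v) = (S^D(u)·v)(θ)` on `A^D` is non-degenerate
(in both arguments). -/
theorem stmt_18 {k : Type*} [Field k] (hchar : (2 : k) ≠ 0)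
    {A : Type*} [Ring A] [HopfAlgebra k A] [FiniteDimensional k A]
    (θ : A) (hθ0 : θ ≠ 0)
    (hint : ∀ a : A, a * θ = (Coalgebra.counit (R := k) a) • θ)
    (hgen : ∀ θ' : A, (∀ a : A, a * θ' = (Coalgebra.counit (R := k) a) • θ') →
      ∃ t : k, θ' = t • θ) :
    (∀ u : Module.Dual k A, (∀ v, kappa k θ u v = 0) → u = 0) ∧
    (∀ v : Module.Dual k A, (∀ u, kappa k θ u v = 0) → v = 0) := by
  classical
  set S : A →ₗ[k] A := HopfAlgebra.antipode (R := k) with hS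
  set rθ : Coalgebra.Repr k θ (A × A) := ℛ k θ with hrθ
  have hκ : ∀ u v : Module.Dual k A, kappa k θ u v
      = ∑ m ∈ rθ.index, u (S (rθ.left m)) * v (rθ.right m) := by
    intro u v
    unfold kappa
    rw [← rθ.eq]
    simp only [map_sum, TensorProduct.map_tmul, LinearMap.mul'_apply, LinearMap.coe_comp,
      Function.comp_apply, hS]
  obtain ⟨T, hST, hTS, hT1, hTm, hTB⟩ := HopfAux.exists_Tinv θ hθ0 hint
  have hSsurj := HopfAux.antipode_surjective θ hθ0 hint
  have hSinj := HopfAux.antipode_injective θ hθ0 hint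
  constructor
  · intro u hu
    have hΦ : (∑ m ∈ rθ.index, u (S (rθ.left m)) • rθ.right m) = 0 := by
      rw [← Module.forall_dual_apply_eq_zero_iff k]
      intro v
      rw [map_sum]
      simp only [map_smul, smul_eq_mul]
      rw [← hκ u v]
      exact hu v
    have hu' : ∑ m ∈ rθ.index, (u ∘ₗ S ∘ₗ S) (T (rθ.left m)) • rθ.right m = 0 := by
      have e : ∀ m, (u ∘ₗ S ∘ₗ S) (T (rθ.left m)) = u (S (rθ.left m)) := by
        intro m
        simp only [LinearMap.coe_comp, Function.comp_apply, hS, hST]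
      rw [Finset.sum_congr rfl fun m _ => by rw [e m]]
      exact hΦ
    have h0 := HopfAux.dual_inj_B θ T rθ hθ0 hint hT1 hTm hTB (u ∘ₗ S ∘ₗ S) hu'
    apply LinearMap.ext; intro a
    obtain ⟨b, hb⟩ := hSsurj a
    obtain ⟨c, hc⟩ := hSsurj b
    have h1 := LinearMap.congr_fun h0 c
    simp only [LinearMap.coe_comp, Function.comp_apply, LinearMap.zero_apply] at h1 ⊢
    rw [show (HopfAlgebra.antipode (R := k) c : A) = S c from rfl] at h1
    rw [hc, hb] at h1
    exact h1
  · intro v hv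
    have hΨ : ∑ m ∈ rθ.index, v (rθ.right m) • S (rθ.left m) = 0 := by
      rw [← Module.forall_dual_apply_eq_zero_iff k]
      intro u
      rw [map_sum]
      simp only [map_smul, smul_eq_mul]
      rw [Finset.sum_congr rfl fun m (_ : m ∈ rθ.index) =>
        mul_comm (v (rθ.right m)) (u (S (rθ.left m))), ← hκ u v]
      exact hv u
    have hΨ0 : ∑ m ∈ rθ.index, v (rθ.right m) • rθ.left m = 0 := by
      apply hSinj
      rw [map_sum, map_zero]
      simp only [map_smul]
      exact hΨ
    have hw : ∑ m ∈ rθ.index, (v ∘ₗ T) (S (rθ.right m)) • rθ.left m = 0 := by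
      have e : ∀ m, (v ∘ₗ T) (S (rθ.right m)) = v (rθ.right m) := by
        intro m
        simp only [LinearMap.coe_comp, Function.comp_apply, hS, hTS]
      rw [Finset.sum_congr rfl fun m _ => by rw [e m]]
      exact hΨ0
    have h0 := HopfAux.dual_inj_A θ S rθ hθ0 hint HopfAux.antipode_one
      HopfAux.antipode_mul' HopfAux.hSA (v ∘ₗ T) hw
    apply LinearMap.ext; intro a
    have h1 := LinearMap.congr_fun h0 (S a)
    simp only [LinearMap.coe_comp, Function.comp_apply, LinearMap.zero_apply, hS, hTS] at h1 ⊢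
    exact h1
end
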